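/- Let D = (S, δ, P) be a strongly connected finite discrete-time Markov chain with initial distribution δ. For every probability distribution μ over S there exists a vector λ ∈ [0,1]^S such that, in the modified Markov chain D_λ obtained from D by adding for each state s a fresh absorbing copy s' reached from s with probability λ(s) (all other transition probabilities from s rescaled by the factor (1 − λ(s))), the probability of eventually reaching s' when starting from δ equals μ(s) for every state s. -/

import Mathlib

/-- In the modified chain `D_λ` (each state `s` moves to its fresh absorbing copy `s'`
with probability `λ(s)`, other transitions rescaled by `1 - λ(s)`), this is the
probability of hitting the copy `t'` within `n` steps, starting from state `u`. -/
noncomputable def reachCopy {S : Type} [Fintype S] [DecidableEq S]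
    (P : S → S → ℝ) (lam : S → ℝ) (t : S) : ℕ → S → ℝ
  | 0, _ => 0
  | n + 1, u =>
      (if u = t then lam t else 0) + (1 - lam u) * ∑ v, P u v * reachCopy P lam t n v

open Finset Filter Topology

noncomputable def occm {S : Type} [Fintype S]
    (P : S → S → ℝ) (lam : S → ℝ) (w : S → ℝ) : ℕ → S → ℝ
  | 0 => w
  | k + 1 => fun v => ∑ u, occm P lam w k u * ((1 - lam u) * P u v)

section aux
set_option linter.unusedSectionVars false
variable {S : Type} [Fintype S] [DecidableEq S]

lemma rtg_prop {R : S → S → Prop} {Q : S → Prop}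
    (h : ∀ a b, R a b → Q a → Q b) {u v : S}
    (hp : Relation.ReflTransGen R u v) (hu : Q u) : Q v := by
  induction hp with
  | refl => exact hu
  | tail _ hbc ih => exact h _ _ hbc ih

lemma occm_shift' (P : S → S → ℝ) (lam : S → ℝ) :
    ∀ (k : ℕ) (w : S → ℝ),
      occm P lam (occm P lam w 1) k = occm P lam w (k + 1) := by
  intro k
  induction k with
  | zero => intro w; rfl
  | succ k ih =>
      intro w
      show (fun v => ∑ u, occm P lam (occm P lam w 1) k u * ((1 - lam u) * P u v)) = _
      rw [ih w]
      rfl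

lemma reach_formula (P : S → S → ℝ) (lam : S → ℝ) (t : S) :
    ∀ (n : ℕ) (w : S → ℝ),
      ∑ s, w s * reachCopy P lam t n s = lam t * ∑ k ∈ Finset.range n, occm P lam w k t := by
  intro n
  induction n with
  | zero => intro w; simp [reachCopy]
  | succ n ih =>
      intro w
      have hr : ∀ s, reachCopy P lam t (n+1) s
          = (if s = t then lam t else 0) + (1 - lam s) * ∑ v, P s v * reachCopy P lam t n v :=
        fun s => rfl
      calc ∑ s, w s * reachCopy P lam t (n+1) s
          = ∑ s, (w s * (if s = t then lam t else 0)
              + w s * ((1 - lam s) * ∑ v, P s v * reachCopy P lam t n v)) := by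
            refine Finset.sum_congr rfl fun s _ => ?_
            rw [hr s]; ring
        _ = w t * lam t + ∑ s, w s * ((1 - lam s) * ∑ v, P s v * reachCopy P lam t n v) := by
            rw [Finset.sum_add_distrib]
            congr 1
            simp [mul_ite]
        _ = w t * lam t + ∑ v, (∑ s, w s * ((1 - lam s) * P s v)) * reachCopy P lam t n v := by
            congr 1
            calc ∑ s, w s * ((1 - lam s) * ∑ v, P s v * reachCopy P lam t n v)
                = ∑ s, ∑ v, (w s * ((1 - lam s) * P s v)) * reachCopy P lam t n v := by
                  refine Finset.sum_congr rfl fun s _ => ?_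
                  simp only [Finset.mul_sum]
                  exact Finset.sum_congr rfl fun v _ => by ring
              _ = ∑ v, ∑ s, (w s * ((1 - lam s) * P s v)) * reachCopy P lam t n v :=
                  Finset.sum_comm
              _ = ∑ v, (∑ s, w s * ((1 - lam s) * P s v)) * reachCopy P lam t n v := by
                  exact Finset.sum_congr rfl fun v _ => (Finset.sum_mul ..).symm
        _ = w t * lam t + ∑ v, (occm P lam w 1 v) * reachCopy P lam t n v := rfl
        _ = w t * lam t + lam t * ∑ k ∈ Finset.range n, occm P lam (occm P lam w 1) k t := by
            rw [ih]
        _ = w t * lam t + lam t * ∑ k ∈ Finset.range n, occm P lam w (k+1) t := by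
            simp only [occm_shift']
        _ = lam t * ∑ k ∈ Finset.range (n+1), occm P lam w k t := by
            rw [Finset.sum_range_succ']
            show _ = lam t * (_ + w t)
            ring

variable [Nonempty S]

lemma key_linear (P : S → S → ℝ) (hnn : ∀ u v, 0 ≤ P u v) (hrow : ∀ u, ∑ v, P u v = 1)
    (hconn : ∀ u v, Relation.ReflTransGen (fun a b => 0 < P a b) u v) :
    (∃ w : S → ℝ, w ≠ 0 ∧ ∀ t, ∑ u, w u * P u t = w t) ∧
    (∀ g : S → ℝ, ∑ s, g s = 0 → ∃ z : S → ℝ, ∀ t, z t - ∑ u, z u * P u t = g t) := by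
  classical
  set n := Fintype.card S with hn
  have hn1 : 1 ≤ n := Fintype.card_pos
  set A : Matrix S S ℝ := Matrix.of (fun u v => (if u = v then (1:ℝ) else 0) - P u v) with hA
  set N : (S → ℝ) →ₗ[ℝ] (S → ℝ) := A.mulVecLin with hN
  set L : (S → ℝ) →ₗ[ℝ] (S → ℝ) := (Matrix.transpose A).mulVecLin with hL
  have hNapp : ∀ f u, N f u = f u - ∑ v, P u v * f v := by
    intro f u
    simp only [hN, Matrix.mulVecLin_apply, Matrix.mulVec, dotProduct, hA, Matrix.of_apply,
      sub_mul, Finset.sum_sub_distrib, ite_mul, one_mul, zero_mul, Finset.sum_ite_eq,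
      Finset.mem_univ, if_true]
  have hLapp : ∀ z t, L z t = z t - ∑ u, z u * P u t := by
    intro z t
    simp only [hL, Matrix.mulVecLin_apply, Matrix.mulVec, dotProduct, Matrix.transpose_apply,
      hA, Matrix.of_apply, sub_mul, Finset.sum_sub_distrib, ite_mul, one_mul, zero_mul,
      Finset.sum_ite_eq, Finset.mem_univ, if_true]
    simp [mul_comm]
  -- kernel of N is the constants
  have hker : LinearMap.ker N = Submodule.span ℝ {(fun _ => (1:ℝ) : S → ℝ)} := by
    apply le_antisymm
    · intro f hf
      have hf' : ∀ u, f u = ∑ v, P u v * f v := by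
        intro u
        have h0 := congrFun (LinearMap.mem_ker.mp hf) u
        rw [hNapp, Pi.zero_apply] at h0
        linarith
      obtain ⟨u0, -, hu0⟩ := Finset.exists_max_image Finset.univ f ⟨Classical.arbitrary S, mem_univ _⟩
      have hmax : ∀ v, f v ≤ f u0 := fun v => hu0 v (mem_univ _)
      have hstep : ∀ a b, 0 < P a b → f a = f u0 → f b = f u0 := by
        intro a b hab hfa
        by_contra hne
        have hlt : f b < f u0 := lt_of_le_of_ne (hmax b) hne
        have : ∑ v, P a v * f v < ∑ v, P a v * f u0 := by
          apply Finset.sum_lt_sum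
          · intro i _; exact mul_le_mul_of_nonneg_left (hmax i) (hnn a i)
          · exact ⟨b, mem_univ _, by nlinarith [hnn a b]⟩
        rw [← hf' a, ← Finset.sum_mul, hrow a, one_mul, hfa] at this
        exact lt_irrefl _ this
      have hall : ∀ v, f v = f u0 := fun v => rtg_prop hstep (hconn u0 v) rfl
      have : f = (f u0) • (fun _ => (1:ℝ)) := by
        funext v; simp [hall v]
      rw [this]
      exact Submodule.smul_mem _ _ (Submodule.mem_span_singleton_self _)
    · rw [Submodule.span_le, Set.singleton_subset_iff]
      simp only [SetLike.mem_coe, LinearMap.mem_ker]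
      funext u
      simp [hNapp, hrow u]
  have hone_ne : (fun _ => (1:ℝ) : S → ℝ) ≠ 0 := by
    intro h
    have := congrFun h (Classical.arbitrary S)
    norm_num at this
  have hkerdim : Module.finrank ℝ (LinearMap.ker N) = 1 := by
    rw [hker]; exact finrank_span_singleton hone_ne
  have hfr : Module.finrank ℝ (S → ℝ) = n := Module.finrank_fintype_fun_eq_card ℝ
  have hrangeN : Module.finrank ℝ (LinearMap.range N) + 1 = n := by
    have := LinearMap.finrank_range_add_finrank_ker N
    rw [hkerdim, hfr] at this; exact this
  have hrankL : Module.finrank ℝ (LinearMap.range L) = Module.finrank ℝ (LinearMap.range N) := by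
    have : (Matrix.transpose A).rank = A.rank := Matrix.rank_transpose A
    exact this
  -- sum functional
  set σl : (S → ℝ) →ₗ[ℝ] ℝ := ∑ s : S, LinearMap.proj s with hσ
  have hσapp : ∀ f, σl f = ∑ s, f s := by
    intro f; simp [hσ, LinearMap.sum_apply]
  have hσsurj : LinearMap.range σl = ⊤ := by
    rw [LinearMap.range_eq_top]
    intro r
    refine ⟨fun _ => r / n, ?_⟩
    rw [hσapp]
    rw [Finset.sum_const, card_univ, ← hn, nsmul_eq_mul]
    field_simp
  have hσker : Module.finrank ℝ (LinearMap.ker σl) + 1 = n := by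
    have := LinearMap.finrank_range_add_finrank_ker σl
    rw [hσsurj, hfr] at this
    rw [finrank_top] at this
    simp only [Module.finrank_self] at this
    omega
  have hrange_le : LinearMap.range L ≤ LinearMap.ker σl := by
    rintro f ⟨z, rfl⟩
    rw [LinearMap.mem_ker, hσapp]
    calc ∑ t, L z t = ∑ t, (z t - ∑ u, z u * P u t) := Finset.sum_congr rfl fun t _ => hLapp z t
      _ = ∑ t, z t - ∑ t, ∑ u, z u * P u t := Finset.sum_sub_distrib _ _
      _ = 0 := by
          rw [Finset.sum_comm]
          have : ∀ u, ∑ t, z u * P u t = z u := by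
            intro u; rw [← Finset.mul_sum, hrow u, mul_one]
          rw [Finset.sum_congr rfl fun u _ => this u]
          ring
  have hrange_eq : LinearMap.range L = LinearMap.ker σl := by
    apply Submodule.eq_of_le_of_finrank_eq hrange_le
    omega
  constructor
  · have hkerL : Module.finrank ℝ (LinearMap.ker L) = 1 := by
      have := LinearMap.finrank_range_add_finrank_ker L
      rw [hfr] at this
      omega
    have hne : LinearMap.ker L ≠ ⊥ := by
      intro h
      rw [h, finrank_bot] at hkerL
      omega
    obtain ⟨w, hw, hw0⟩ := Submodule.exists_mem_ne_zero_of_ne_bot hne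
    refine ⟨w, hw0, ?_⟩
    intro t
    have h0 := congrFun (LinearMap.mem_ker.mp hw) t
    rw [hLapp, Pi.zero_apply] at h0
    linarith
  · intro g hg
    have : g ∈ LinearMap.range L := by
      rw [hrange_eq, LinearMap.mem_ker, hσapp]; exact hg
    obtain ⟨z, hz⟩ := this
    exact ⟨z, fun t => by rw [← hLapp z t, hz]⟩

lemma exists_pos_stationary (P : S → S → ℝ) (hnn : ∀ u v, 0 ≤ P u v)
    (hrow : ∀ u, ∑ v, P u v = 1)
    (hconn : ∀ u v, Relation.ReflTransGen (fun a b => 0 < P a b) u v) :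
    ∃ π : S → ℝ, (∀ s, 0 < π s) ∧ ∀ t, ∑ u, π u * P u t = π t := by
  obtain ⟨⟨w, hw0, hws⟩, -⟩ := key_linear P hnn hrow hconn
  set π : S → ℝ := fun s => |w s| with hπ
  have hstat : ∀ t, ∑ u, π u * P u t = π t := by
    have hle : ∀ t, π t ≤ ∑ u, π u * P u t := by
      intro t
      calc π t = |∑ u, w u * P u t| := by rw [hws t]
        _ ≤ ∑ u, |w u * P u t| := Finset.abs_sum_le_sum_abs _ _
        _ = ∑ u, π u * P u t := by
            refine Finset.sum_congr rfl fun u _ => ?_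
            rw [abs_mul, abs_of_nonneg (hnn u t)]
    have hsum : ∑ t, (∑ u, π u * P u t - π t) = 0 := by
      rw [Finset.sum_sub_distrib, Finset.sum_comm]
      have h1 : ∀ u, ∑ t, π u * P u t = π u := fun u => by rw [← Finset.mul_sum, hrow u, mul_one]
      rw [Finset.sum_congr rfl fun u _ => h1 u]; ring
    have h2 := (Finset.sum_eq_zero_iff_of_nonneg (fun t _ => sub_nonneg.mpr (hle t))).mp hsum
    intro t; have := h2 t (mem_univ t); linarith
  have hex : ∃ t, 0 < π t := by
    by_contra h
    push_neg at h
    have : ∀ s, w s = 0 := fun s => abs_eq_zero.mp (le_antisymm (h s) (abs_nonneg _))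
    exact hw0 (funext this)
  obtain ⟨t0, ht0⟩ := hex
  refine ⟨π, fun s => ?_, hstat⟩
  have hstep : ∀ a b, 0 < P a b → 0 < π a → 0 < π b := by
    intro a b hab ha
    have h3 : π a * P a b ≤ ∑ u, π u * P u b :=
      Finset.single_le_sum (fun u _ => mul_nonneg (abs_nonneg _) (hnn u b)) (mem_univ a)
    rw [hstat b] at h3
    nlinarith
  exact rtg_prop hstep (hconn t0 s) ht0

end aux

/-- For a strongly connected DTMC `(S, δ, P)` and any distribution `μ` over `S`, there
is a vector `λ ∈ [0,1]^S` such that in `D_λ` the probability of eventually reaching the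
copy `t'` (starting from `δ`) equals `μ(t)` for every state `t`. -/
theorem dtmc_exit_frequencies {S : Type} [Fintype S] [DecidableEq S] [Nonempty S]
    (P : S → S → ℝ) (δ : S → ℝ)
    (hnn : ∀ u v, 0 ≤ P u v) (hrow : ∀ u, ∑ v, P u v = 1)
    (hconn : ∀ u v, Relation.ReflTransGen (fun a b => 0 < P a b) u v)
    (hδnn : ∀ s, 0 ≤ δ s) (hδ1 : ∑ s, δ s = 1)
    (μ : S → ℝ) (hμnn : ∀ s, 0 ≤ μ s) (hμ1 : ∑ s, μ s = 1) :
    ∃ lam : S → ℝ, (∀ s, 0 ≤ lam s ∧ lam s ≤ 1) ∧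
      ∀ t, (⨆ n : ℕ, ∑ s, δ s * reachCopy P lam t n s) = μ t := by
  classical
  obtain ⟨π, hπpos, hπstat⟩ := exists_pos_stationary P hnn hrow hconn
  obtain ⟨-, hsolve⟩ := key_linear P hnn hrow hconn
  obtain ⟨z0, hz0⟩ := hsolve (fun s => δ s - μ s)
    (by rw [Finset.sum_sub_distrib, hδ1, hμ1]; ring)
  -- make the solution nonnegative by adding a multiple of the stationary vector
  set c : ℝ := max (Finset.univ.sup' Finset.univ_nonempty (fun s => (-z0 s) / π s)) 0 with hc
  set z : S → ℝ := fun s => z0 s + c * π s with hzdef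
  have hznn : ∀ s, 0 ≤ z s := by
    intro s
    have h1 : (-z0 s) / π s ≤ c :=
      le_trans (Finset.le_sup' (fun s => (-z0 s) / π s) (mem_univ s)) (le_max_left _ _)
    have h2 : (-z0 s) / π s * π s ≤ c * π s :=
      mul_le_mul_of_nonneg_right h1 (hπpos s).le
    rw [div_mul_cancel₀ _ (hπpos s).ne'] at h2
    simp only [hzdef]
    linarith
  have hz : ∀ t, z t - ∑ u, z u * P u t = δ t - μ t := by
    intro t
    have h1 : ∑ u, z u * P u t = (∑ u, z0 u * P u t) + c * ∑ u, π u * P u t := by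
      rw [Finset.mul_sum, ← Finset.sum_add_distrib]
      exact Finset.sum_congr rfl fun u _ => by simp only [hzdef]; ring
    rw [h1, hπstat t]
    have := hz0 t
    simp only [hzdef]
    linarith
  set x : S → ℝ := fun s => z s + μ s with hxdef
  have hxnn : ∀ s, 0 ≤ x s := fun s => add_nonneg (hznn s) (hμnn s)
  have hμle : ∀ s, μ s ≤ x s := fun s => by simp only [hxdef]; linarith [hznn s]
  set lam : S → ℝ := fun s => if x s = 0 then 0 else μ s / x s with hlamdef
  have hlamnn : ∀ s, 0 ≤ lam s := by
    intro s
    simp only [hlamdef]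
    split
    · exact le_refl 0
    · exact div_nonneg (hμnn s) (hxnn s)
  have hlam1 : ∀ s, lam s ≤ 1 := by
    intro s
    simp only [hlamdef]
    split
    · norm_num
    · rename_i h
      exact div_le_one_of_le₀ (hμle s) (hxnn s)
  have hlamx : ∀ s, lam s * x s = μ s := by
    intro s
    simp only [hlamdef]
    split
    · rename_i h
      have : μ s = 0 := le_antisymm (h ▸ hμle s) (hμnn s)
      rw [this, zero_mul]
    · rename_i h
      rw [div_mul_cancel₀ _ h]
  have hzx : ∀ s, (1 - lam s) * x s = z s := by
    intro s
    have h1 := hlamx s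
    have : (1 - lam s) * x s = x s - lam s * x s := by ring
    rw [this, h1]
    simp only [hxdef]; ring
  have hxfix : ∀ v, x v = δ v + ∑ u, x u * ((1 - lam u) * P u v) := by
    intro v
    have h1 : ∑ u, x u * ((1 - lam u) * P u v) = ∑ u, z u * P u v := by
      refine Finset.sum_congr rfl fun u _ => ?_
      rw [show x u * ((1 - lam u) * P u v) = ((1 - lam u) * x u) * P u v from by ring, hzx u]
    rw [h1]
    have := hz v
    simp only [hxdef]
    linarith
  refine ⟨lam, fun s => ⟨hlamnn s, hlam1 s⟩, ?_⟩
  set Sn : ℕ → S → ℝ := fun n v => ∑ k ∈ Finset.range n, occm P lam δ k v with hSn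
  have hocc_nn : ∀ (k : ℕ) (v : S), 0 ≤ occm P lam δ k v := by
    intro k
    induction k with
    | zero => exact hδnn
    | succ k ih =>
        intro v
        exact Finset.sum_nonneg fun u _ =>
          mul_nonneg (ih u) (mul_nonneg (by linarith [hlam1 u]) (hnn u v))
  have hSrec : ∀ n v, Sn (n+1) v = δ v + ∑ u, Sn n u * ((1 - lam u) * P u v) := by
    intro n v
    show ∑ k ∈ Finset.range (n+1), occm P lam δ k v = _
    rw [Finset.sum_range_succ']
    have h1 : ∀ k, occm P lam δ (k+1) v = ∑ u, occm P lam δ k u * ((1 - lam u) * P u v) :=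
      fun k => rfl
    calc (∑ k ∈ Finset.range n, occm P lam δ (k+1) v) + occm P lam δ 0 v
        = δ v + ∑ k ∈ Finset.range n, ∑ u, occm P lam δ k u * ((1 - lam u) * P u v) := by
          exact add_comm _ _
      _ = δ v + ∑ u, (∑ k ∈ Finset.range n, occm P lam δ k u) * ((1 - lam u) * P u v) := by
          congr 1
          rw [Finset.sum_comm]
          exact Finset.sum_congr rfl fun u _ => (Finset.sum_mul ..).symm
      _ = δ v + ∑ u, Sn n u * ((1 - lam u) * P u v) := rfl
  have hcoef_nn : ∀ u v, 0 ≤ (1 - lam u) * P u v :=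
    fun u v => mul_nonneg (by linarith [hlam1 u]) (hnn u v)
  have hSle : ∀ n v, Sn n v ≤ x v := by
    intro n
    induction n with
    | zero => intro v; simp only [hSn, Finset.range_zero, Finset.sum_empty]; exact hxnn v
    | succ n ih =>
        intro v
        rw [hSrec n v, hxfix v]
        have : ∑ u, Sn n u * ((1 - lam u) * P u v) ≤ ∑ u, x u * ((1 - lam u) * P u v) :=
          Finset.sum_le_sum fun u _ => mul_le_mul_of_nonneg_right (ih u) (hcoef_nn u v)
        linarith
  have hSmono : ∀ v, Monotone fun n => Sn n v := by
    intro v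
    apply monotone_nat_of_le_succ
    intro n
    exact Finset.sum_le_sum_of_subset_of_nonneg
      (Finset.range_subset_range.mpr (Nat.le_succ n)) (fun k _ _ => hocc_nn k v)
  have hbddS : ∀ v, BddAbove (Set.range fun n => Sn n v) := by
    intro v
    refine ⟨x v, ?_⟩
    rintro y ⟨n, rfl⟩
    exact hSle n v
  set σf : S → ℝ := fun v => ⨆ n, Sn n v with hσf
  have htend : ∀ v, Tendsto (fun n => Sn n v) atTop (𝓝 (σf v)) :=
    fun v => tendsto_atTop_ciSup (hSmono v) (hbddS v)
  have hσle : ∀ v, σf v ≤ x v := fun v => ciSup_le fun n => hSle n v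
  have hσfix : ∀ v, σf v = δ v + ∑ u, σf u * ((1 - lam u) * P u v) := by
    intro v
    have h3 : Tendsto (fun n => Sn (n+1) v) atTop (𝓝 (σf v)) :=
      (htend v).comp (tendsto_add_atTop_nat 1)
    have h4 : Tendsto (fun n => δ v + ∑ u, Sn n u * ((1 - lam u) * P u v)) atTop
        (𝓝 (δ v + ∑ u, σf u * ((1 - lam u) * P u v))) :=
      tendsto_const_nhds.add (tendsto_finset_sum _ fun u _ => (htend u).mul_const _)
    have hfun : (fun n => Sn (n+1) v) = fun n => δ v + ∑ u, Sn n u * ((1 - lam u) * P u v) :=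
      funext fun n => hSrec n v
    rw [hfun] at h3
    exact tendsto_nhds_unique h3 h4
  set d : S → ℝ := fun v => x v - σf v with hddef
  have hdnn : ∀ v, 0 ≤ d v := fun v => sub_nonneg.mpr (hσle v)
  have hdfix : ∀ v, d v = ∑ u, d u * ((1 - lam u) * P u v) := by
    intro v
    have h5 : ∑ u, d u * ((1 - lam u) * P u v)
        = ∑ u, x u * ((1 - lam u) * P u v) - ∑ u, σf u * ((1 - lam u) * P u v) := by
      rw [← Finset.sum_sub_distrib]
      refine Finset.sum_congr rfl fun u _ => ?_
      show (x u - σf u) * _ = _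
      ring
    rw [h5]
    have h1 := hxfix v
    have h2 := hσfix v
    show x v - σf v = _
    linarith
  have hdlam : ∀ u, d u * lam u = 0 := by
    have hswap : ∑ v, d v = ∑ u, d u * (1 - lam u) := by
      calc ∑ v, d v = ∑ v, ∑ u, d u * ((1 - lam u) * P u v) :=
            Finset.sum_congr rfl fun v _ => hdfix v
        _ = ∑ u, ∑ v, d u * ((1 - lam u) * P u v) := Finset.sum_comm
        _ = ∑ u, d u * (1 - lam u) := by
            refine Finset.sum_congr rfl fun u _ => ?_
            rw [← Finset.mul_sum, ← Finset.mul_sum, hrow u, mul_one]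
    have hzero : ∑ u, d u * lam u = 0 := by
      have h6 : ∑ u, d u * (1 - lam u) = ∑ u, d u - ∑ u, d u * lam u := by
        rw [← Finset.sum_sub_distrib]
        exact Finset.sum_congr rfl fun u _ => by ring
      rw [h6] at hswap
      linarith
    intro u
    exact (Finset.sum_eq_zero_iff_of_nonneg
      (fun u _ => mul_nonneg (hdnn u) (hlamnn u))).mp hzero u (mem_univ u)
  obtain ⟨t0, ht0⟩ : ∃ s, 0 < μ s := by
    by_contra h
    push_neg at h
    have : ∑ s, μ s = 0 := Finset.sum_eq_zero fun s _ => le_antisymm (h s) (hμnn s)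
    rw [hμ1] at this
    norm_num at this
  have hlamt0 : 0 < lam t0 := by
    rcases eq_or_lt_of_le (hlamnn t0) with h | h
    · exfalso
      have := hlamx t0
      rw [← h, zero_mul] at this
      linarith
    · exact h
  have hdt0 : d t0 = 0 := by
    have := hdlam t0
    rcases mul_eq_zero.mp this with h | h
    · exact h
    · exact absurd h hlamt0.ne'
  have hdzero : ∀ v, d v = 0 := by
    intro v
    by_contra h
    have hdv : 0 < d v := lt_of_le_of_ne (hdnn v) (Ne.symm h)
    have hstep : ∀ a b, 0 < P a b → 0 < d a → 0 < d b := by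
      intro a b hab ha
      have hla : lam a = 0 := by
        rcases mul_eq_zero.mp (hdlam a) with h' | h'
        · exact absurd h' ha.ne'
        · exact h'
      have h7 : d a * ((1 - lam a) * P a b) ≤ ∑ u, d u * ((1 - lam u) * P u b) :=
        Finset.single_le_sum (fun u _ => mul_nonneg (hdnn u) (hcoef_nn u b)) (mem_univ a)
      rw [← hdfix b] at h7
      rw [hla] at h7
      nlinarith
    have := rtg_prop hstep (hconn v t0) hdv
    rw [hdt0] at this
    exact lt_irrefl _ this
  have hσx : ∀ v, σf v = x v := by
    intro v
    have := hdzero v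
    simp only [hddef] at this
    linarith
  intro t
  rw [iSup_congr (fun n => reach_formula P lam t n δ)]
  have hmono : Monotone fun n => lam t * Sn n t :=
    fun a b hab => mul_le_mul_of_nonneg_left (hSmono t hab) (hlamnn t)
  have hbdd : BddAbove (Set.range fun n => lam t * Sn n t) := by
    refine ⟨lam t * x t, ?_⟩
    rintro y ⟨n, rfl⟩
    exact mul_le_mul_of_nonneg_left (hSle n t) (hlamnn t)
  have h1 : Tendsto (fun n => lam t * Sn n t) atTop (𝓝 (⨆ n, lam t * Sn n t)) :=
    tendsto_atTop_ciSup hmono hbdd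
  have h2 : Tendsto (fun n => lam t * Sn n t) atTop (𝓝 (lam t * σf t)) :=
    (htend t).const_mul (lam t)
  have h8 : (⨆ n, lam t * Sn n t) = lam t * σf t := tendsto_nhds_unique h1 h2
  show (⨆ n, lam t * Sn n t) = μ t
  rw [h8, hσx t, hlamx t]
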